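/- arXiv:math/0209406 — 3 statements merged into one kernel-verified Lean document; each statement's English description precedes it below -/
import Mathlib

section
/- Let K be an algebraically closed field, and let X, X' be integral varieties over K whose only invertible regular functions are constants. If X' × (K^*)^{r'} is isomorphic to X × (K^*)^r as varieties, then r = r'. -/
/-!  Auxiliary results: trivial units in `AddMonoidAlgebra R G` for a domain `R`
and a linearly ordered abelian group `G`, the degree homomorphism on units,
and a divisibility argument over algebraically closed fields. -/

open Finsupp

section TrivialUnits

variable {R : Type*} [CommRing R] [IsDomain R]
variable {G : Type*} [AddCommGroup G] [LinearOrder G] [IsOrderedAddMonoid G]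

/-- The coefficient of a product at the sum of the maximal degrees is the product of
the leading coefficients. -/
theorem mul_apply_max_aux (f g : AddMonoidAlgebra R G)
    (hf : f.coeff.support.Nonempty) (hg : g.coeff.support.Nonempty) :
    (f * g).coeff (f.coeff.support.max' hf + g.coeff.support.max' hg)
      = f.coeff (f.coeff.support.max' hf) * g.coeff (g.coeff.support.max' hg) := by
  classical
  rw [AddMonoidAlgebra.mul_apply]
  rw [Finsupp.sum]
  rw [Finset.sum_eq_single (f.coeff.support.max' hf)]
  · rw [Finsupp.sum, Finset.sum_eq_single (g.coeff.support.max' hg)]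
    · rw [if_pos rfl]
    · intro b hb hne
      refine if_neg fun he => ?_
      have hb' : b < g.coeff.support.max' hg := lt_of_le_of_ne (Finset.le_max' _ _ hb) hne
      exact (add_lt_add_right hb' _).ne he
    · intro h; exact absurd (Finset.max'_mem _ _) h
  · intro a ha hne
    refine Finset.sum_eq_zero fun b hb => if_neg fun he => ?_
    have ha' : a < f.coeff.support.max' hf := lt_of_le_of_ne (Finset.le_max' _ _ ha) hne
    exact (add_lt_add_of_lt_of_le ha' (Finset.le_max' _ _ hb)).ne he
  · intro h; exact absurd (Finset.max'_mem _ _) h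

/-- The coefficient of a product at the sum of the minimal degrees is the product of
the trailing coefficients. -/
theorem mul_apply_min_aux (f g : AddMonoidAlgebra R G)
    (hf : f.coeff.support.Nonempty) (hg : g.coeff.support.Nonempty) :
    (f * g).coeff (f.coeff.support.min' hf + g.coeff.support.min' hg)
      = f.coeff (f.coeff.support.min' hf) * g.coeff (g.coeff.support.min' hg) := by
  classical
  rw [AddMonoidAlgebra.mul_apply]
  rw [Finsupp.sum]
  rw [Finset.sum_eq_single (f.coeff.support.min' hf)]
  · rw [Finsupp.sum, Finset.sum_eq_single (g.coeff.support.min' hg)]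
    · rw [if_pos rfl]
    · intro b hb hne
      refine if_neg fun he => ?_
      have hb' : g.coeff.support.min' hg < b := lt_of_le_of_ne (Finset.min'_le _ _ hb) (Ne.symm hne)
      exact ((add_lt_add_right hb' _).ne' he)
    · intro h; exact absurd (Finset.min'_mem _ _) h
  · intro a ha hne
    refine Finset.sum_eq_zero fun b hb => if_neg fun he => ?_
    have ha' : f.coeff.support.min' hf < a := lt_of_le_of_ne (Finset.min'_le _ _ ha) (Ne.symm hne)
    exact ((add_lt_add_of_lt_of_le ha' (Finset.min'_le _ _ hb)).ne' he)
  · intro h; exact absurd (Finset.min'_mem _ _) h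

/-- Triviality of units: a factor of `1` in `AddMonoidAlgebra R G` is a single monomial. -/
theorem eq_single_of_mul_eq_one {f g : AddMonoidAlgebra R G} (h : f * g = 1) :
    ∃ (a : G) (c : R), c ≠ 0 ∧ f = AddMonoidAlgebra.single a c := by
  classical
  have hf : f ≠ 0 := by
    rintro rfl
    have := congrArg (fun p : AddMonoidAlgebra R G => p.coeff 0) h
    simp [AddMonoidAlgebra.one_def] at this
  have hg : g ≠ 0 := by
    rintro rfl
    have := congrArg (fun p : AddMonoidAlgebra R G => p.coeff 0) h
    simp [AddMonoidAlgebra.one_def] at this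
  have hfs : f.coeff.support.Nonempty := Finsupp.support_nonempty_iff.mpr (mt AddMonoidAlgebra.coeff_eq_zero.mp hf)
  have hgs : g.coeff.support.Nonempty := Finsupp.support_nonempty_iff.mpr (mt AddMonoidAlgebra.coeff_eq_zero.mp hg)
  set aM := f.coeff.support.max' hfs with haM
  set bM := g.coeff.support.max' hgs with hbM
  set am := f.coeff.support.min' hfs with ham
  set bm := g.coeff.support.min' hgs with hbm
  have hone : (f * g).coeff.support = {(0 : G)} := by
    rw [h, AddMonoidAlgebra.one_def, AddMonoidAlgebra.coeff_single, Finsupp.support_single_ne_zero _ (one_ne_zero)]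
  have hMmem : aM + bM ∈ (f * g).coeff.support := by
    rw [Finsupp.mem_support_iff, mul_apply_max_aux f g hfs hgs]
    exact mul_ne_zero (Finsupp.mem_support_iff.mp (Finset.max'_mem _ _))
      (Finsupp.mem_support_iff.mp (Finset.max'_mem _ _))
  have hmmem : am + bm ∈ (f * g).coeff.support := by
    rw [Finsupp.mem_support_iff, mul_apply_min_aux f g hfs hgs]
    exact mul_ne_zero (Finsupp.mem_support_iff.mp (Finset.min'_mem _ _))
      (Finsupp.mem_support_iff.mp (Finset.min'_mem _ _))
  rw [hone, Finset.mem_singleton] at hMmem hmmem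
  have haMm : am ≤ aM := Finset.min'_le _ _ (Finset.max'_mem _ _)
  have hbMm : bm ≤ bM := Finset.min'_le _ _ (Finset.max'_mem _ _)
  have heq : am = aM := by
    by_contra hc
    have hlt : am < aM := lt_of_le_of_ne haMm hc
    have : am + bm < aM + bM := add_lt_add_of_lt_of_le hlt hbMm
    rw [hMmem, hmmem] at this
    exact lt_irrefl _ this
  have hsub : f.coeff.support ⊆ {aM} := by
    intro x hx
    rw [Finset.mem_singleton]
    exact le_antisymm (Finset.le_max' _ _ hx) (heq ▸ Finset.min'_le _ _ hx)
  refine ⟨aM, f.coeff aM, Finsupp.mem_support_iff.mp (Finset.max'_mem _ _), ?_⟩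
  exact AddMonoidAlgebra.coeff_injective (Finsupp.eq_single_iff.mpr ⟨hsub, rfl⟩)

/-- Every unit of `AddMonoidAlgebra R G` is a monomial with unit coefficient. -/
theorem unit_decomp (u : (AddMonoidAlgebra R G)ˣ) :
    ∃ (a : G) (c : Rˣ), (u : AddMonoidAlgebra R G) = AddMonoidAlgebra.single a (c : R) := by
  obtain ⟨a, c, hc, hf⟩ := eq_single_of_mul_eq_one u.mul_inv
  obtain ⟨b, d, hd, hg⟩ := eq_single_of_mul_eq_one u.inv_mul
  have h1 := u.mul_inv
  rw [hf, hg, AddMonoidAlgebra.single_mul_single, AddMonoidAlgebra.one_def] at h1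
  rcases AddMonoidAlgebra.single_inj.mp h1 with ⟨_, h2⟩ | h2
  · exact ⟨a, ⟨c, d, h2, by rw [mul_comm]; exact h2⟩, hf⟩
  · exact absurd h2.2 one_ne_zero

variable (R G) in
/-- The monomial `single g 1` as a unit. -/
noncomputable def singleUnit (g : G) : (AddMonoidAlgebra R G)ˣ where
  val := AddMonoidAlgebra.single g 1
  inv := AddMonoidAlgebra.single (-g) 1
  val_inv := by
    rw [AddMonoidAlgebra.single_mul_single, add_neg_cancel, mul_one, AddMonoidAlgebra.one_def]
  inv_val := by
    rw [AddMonoidAlgebra.single_mul_single, neg_add_cancel, mul_one, AddMonoidAlgebra.one_def]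

@[simp] lemma singleUnit_val (g : G) :
    ((singleUnit R G g : (AddMonoidAlgebra R G)ˣ) : AddMonoidAlgebra R G)
      = AddMonoidAlgebra.single g 1 := rfl

/-- The degree of a unit. -/
noncomputable def udeg (u : (AddMonoidAlgebra R G)ˣ) : G :=
  (u : AddMonoidAlgebra R G).coeff.support.max'
    (Finsupp.support_nonempty_iff.mpr (mt AddMonoidAlgebra.coeff_eq_zero.mp u.ne_zero))

lemma udeg_eq (u : (AddMonoidAlgebra R G)ˣ) {a : G} {c : R} (hc : c ≠ 0)
    (h : (u : AddMonoidAlgebra R G) = AddMonoidAlgebra.single a c) : udeg u = a := by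
  have hs : (u : AddMonoidAlgebra R G).coeff.support = {a} := by
    rw [h, AddMonoidAlgebra.coeff_single, Finsupp.support_single_ne_zero _ hc]
  apply le_antisymm
  · apply Finset.max'_le
    intro x hx
    rw [hs, Finset.mem_singleton] at hx
    exact hx.le
  · exact Finset.le_max' _ _ (by rw [hs]; exact Finset.mem_singleton_self a)

variable (R G) in
/-- The degree homomorphism on units. -/
noncomputable def udegHom : (AddMonoidAlgebra R G)ˣ →* Multiplicative G where
  toFun u := Multiplicative.ofAdd (udeg u)
  map_one' := by
    show Multiplicative.ofAdd (udeg (1 : (AddMonoidAlgebra R G)ˣ)) = 1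
    have : udeg (1 : (AddMonoidAlgebra R G)ˣ) = 0 :=
      udeg_eq 1 one_ne_zero (by rw [Units.val_one, AddMonoidAlgebra.one_def])
    rw [this]; rfl
  map_mul' u v := by
    obtain ⟨a, c, hu⟩ := unit_decomp u
    obtain ⟨b, d, hv⟩ := unit_decomp v
    have huv : ((u * v : (AddMonoidAlgebra R G)ˣ) : AddMonoidAlgebra R G)
        = AddMonoidAlgebra.single (a + b) ((c : R) * d) := by
      rw [Units.val_mul, hu, hv, AddMonoidAlgebra.single_mul_single]
    have h1 : udeg (u * v) = a + b :=
      udeg_eq _ (mul_ne_zero c.ne_zero d.ne_zero) huv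
    have h2 : udeg u = a := udeg_eq _ c.ne_zero hu
    have h3 : udeg v = b := udeg_eq _ d.ne_zero hv
    show Multiplicative.ofAdd (udeg (u * v)) =
      Multiplicative.ofAdd (udeg u) * Multiplicative.ofAdd (udeg v)
    rw [h1, h2, h3]
    rfl

lemma udegHom_singleUnit (g : G) : udegHom R G (singleUnit R G g) = Multiplicative.ofAdd g := by
  have : udeg (singleUnit R G g) = g := udeg_eq _ one_ne_zero rfl
  show Multiplicative.ofAdd (udeg (singleUnit R G g)) = _
  rw [this]

variable (R G) in
/-- `singleUnit` as a monoid homomorphism from `Multiplicative G`. -/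
noncomputable def singleUnitHom : Multiplicative G →* (AddMonoidAlgebra R G)ˣ where
  toFun g := singleUnit R G (Multiplicative.toAdd g)
  map_one' := by
    apply Units.ext
    show (AddMonoidAlgebra.single (0 : G) (1 : R)) = _
    rw [Units.val_one, AddMonoidAlgebra.one_def]
  map_mul' g h := by
    apply Units.ext
    show (AddMonoidAlgebra.single (Multiplicative.toAdd (g * h)) (1 : R)) = _
    rw [Units.val_mul, singleUnit_val, singleUnit_val, AddMonoidAlgebra.single_mul_single,
      mul_one]
    rfl

end TrivialUnits

/-- Any homomorphism from the units of an algebraically closed field to `ℤ^r` is trivial. -/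
theorem hom_units_int_trivial {K : Type*} [Field K] [IsAlgClosed K] {r : ℕ}
    (χ : Kˣ →* Multiplicative (Fin r → ℤ)) (c : Kˣ) : χ c = 1 := by
  have key : ∀ n : ℕ, 0 < n → ∃ y : Multiplicative (Fin r → ℤ), y ^ n = χ c := by
    intro n hn
    obtain ⟨z, hz⟩ := IsAlgClosed.exists_pow_nat_eq (c : K) hn
    have hz0 : z ≠ 0 := by
      rintro rfl
      rw [zero_pow hn.ne'] at hz
      exact c.ne_zero hz.symm
    refine ⟨χ (Units.mk0 z hz0), ?_⟩
    rw [← map_pow]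
    congr 1
    ext
    push_cast
    exact hz
  have hcoord : ∀ i : Fin r, Multiplicative.toAdd (χ c) i = 0 := by
    intro i
    set n : ℕ := (Multiplicative.toAdd (χ c) i).natAbs + 1 with hn
    obtain ⟨y, hy⟩ := key n (Nat.succ_pos _)
    have h2 : Multiplicative.toAdd (χ c) i = (n : ℤ) * Multiplicative.toAdd y i := by
      conv_lhs => rw [← hy]
      rw [toAdd_pow]
      show (n • Multiplicative.toAdd y) i = _
      rw [Pi.smul_apply, nsmul_eq_mul]
    have hdvd : ((n : ℕ) : ℤ) ∣ Multiplicative.toAdd (χ c) i := Dvd.intro _ h2.symm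
    have habs : |Multiplicative.toAdd (χ c) i| < ((n : ℕ) : ℤ) := by
      rw [hn, Int.abs_eq_natAbs]
      push_cast
      omega
    exact Int.eq_zero_of_abs_lt_dvd hdvd habs
  have h0 : Multiplicative.toAdd (χ c) = 0 := funext hcoord
  rw [← ofAdd_toAdd (χ c), h0]
  rfl

/-- `toLex` as an additive equivalence. -/
def toLexAddEquivFin (n : ℕ) : (Fin n → ℤ) ≃+ Lex (Fin n → ℤ) :=
  { toLex with map_add' := fun _ _ => rfl }

/-- The lexicographic linear ordered group structure on `ℤ^r`. -/
noncomputable instance lexIntLOACG (r : ℕ) : IsOrderedAddMonoid (Lex (Fin r → ℤ)) :=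
  inferInstance

set_option maxHeartbeats 1000000 in
/-- One-sided inequality: an isomorphism `A'[ℤ^{r'}] ≅ A[ℤ^r]` forces `r ≤ r'`,
using only that the units of `A'` come from `K`. -/
theorem torus_factor_le (K : Type*) [Field K] [IsAlgClosed K]
    (A A' : Type*) [CommRing A] [IsDomain A] [Algebra K A]
    [CommRing A'] [IsDomain A'] [Algebra K A']
    (hunits' : ∀ u : A'ˣ, ∃ c : Kˣ, (u : A') = algebraMap K A' (c : K))
    (r r' : ℕ)
    (e : AddMonoidAlgebra A' (Fin r' → ℤ) ≃ₐ[K] AddMonoidAlgebra A (Fin r → ℤ)) :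
    r ≤ r' := by
  classical
  set G := Lex (Fin r → ℤ)
  set G' := Lex (Fin r' → ℤ)
  -- transport the isomorphism to Lex exponents
  let eL : AddMonoidAlgebra A' G' ≃ₐ[K] AddMonoidAlgebra A G :=
    ((AddMonoidAlgebra.domCongr K A' (toLexAddEquivFin r')).symm.trans e).trans
      (AddMonoidAlgebra.domCongr K A (toLexAddEquivFin r))
  let Φ : (AddMonoidAlgebra A' G')ˣ ≃* (AddMonoidAlgebra A G)ˣ :=
    Units.mapEquiv eL.toRingEquiv.toMulEquiv
  -- the degree homomorphism composed with Φ and monomial units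
  let ψ : Multiplicative G' →* Multiplicative G :=
    (udegHom A G).comp (Φ.toMonoidHom.comp (singleUnitHom A' G'))
  -- the constant-units homomorphism from Kˣ
  let ι : Kˣ →* (AddMonoidAlgebra A' G')ˣ :=
    Units.map ((AddMonoidAlgebra.singleZeroRingHom.comp
      (algebraMap K A' : K →+* A')).toMonoidHom)
  -- χ : Kˣ → Multiplicative G is trivial
  have hχ : ∀ k : Kˣ, (udegHom A G) (Φ (ι k)) = 1 := by
    intro k
    set χ : Kˣ →* Multiplicative G := ((udegHom A G).comp Φ.toMonoidHom).comp ι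
    -- conjugate to Multiplicative (Fin r → ℤ)
    let eM : Multiplicative G ≃* Multiplicative (Fin r → ℤ) :=
      AddEquiv.toMultiplicative (toLexAddEquivFin r).symm
    have h1 : (eM.toMonoidHom.comp χ) k = 1 :=
      hom_units_int_trivial (eM.toMonoidHom.comp χ) k
    have h2 : eM (χ k) = 1 := h1
    have := eM.injective (h2.trans (map_one eM).symm)
    exact this
  -- surjectivity of ψ
  have hsurj : Function.Surjective ψ := by
    intro t
    set u : (AddMonoidAlgebra A G)ˣ := singleUnit A G (Multiplicative.toAdd t)
    obtain ⟨a, c, hv⟩ := unit_decomp (Φ.symm u)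
    obtain ⟨k, hk⟩ := hunits' c
    have hdec : Φ.symm u = singleUnit A' G' a * ι k := by
      apply Units.ext
      rw [Units.val_mul, hv]
      show AddMonoidAlgebra.single a (c : A') = AddMonoidAlgebra.single a 1 * AddMonoidAlgebra.single 0 (algebraMap K A' k)
      rw [AddMonoidAlgebra.single_mul_single, add_zero, one_mul, hk]
    refine ⟨Multiplicative.ofAdd a, ?_⟩
    have hu : u = Φ (singleUnit A' G' a) * Φ (ι k) := by
      rw [← map_mul, ← hdec, Φ.apply_symm_apply]
    have ht : (udegHom A G) u = t := by
      show (udegHom A G) (singleUnit A G (Multiplicative.toAdd t)) = t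
      rw [udegHom_singleUnit]
      rfl
    have : ψ (Multiplicative.ofAdd a) = (udegHom A G) (Φ (singleUnit A' G' a)) := rfl
    rw [this, ← ht, hu, map_mul, hχ k, mul_one]
  -- convert to an additive surjection and compare ranks
  let ψ' : G' →+ G := MonoidHom.toAdditive ψ
  have hψ' : Function.Surjective ψ' := hsurj
  let F : (Fin r' → ℤ) →+ (Fin r → ℤ) :=
    ((toLexAddEquivFin r).symm.toAddMonoidHom.comp ψ').comp (toLexAddEquivFin r').toAddMonoidHom
  have hF : Function.Surjective F := by
    intro x
    obtain ⟨y, hy⟩ := hψ' (toLexAddEquivFin r x)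
    exact ⟨(toLexAddEquivFin r').symm y, by
      simp only [F, AddMonoidHom.comp_apply, AddEquiv.coe_toAddMonoidHom,
        AddEquiv.apply_symm_apply, hy, AddEquiv.symm_apply_apply]⟩
  have hrank := LinearMap.rank_le_of_surjective (F.toIntLinearMap) hF
  rw [rank_fin_fun, rank_fin_fun] at hrank
  exact_mod_cast hrank

/-- Cancellation of torus factors (first assertion of Lemma 4.3): if `X`, `X'` are
integral (affine) varieties over an algebraically closed field `K` whose only invertible
regular functions are constants, and `X' × (K*)^{r'} ≅ X × (K*)^r` as varieties, then
`r = r'`.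

We encode a variety by its coordinate ring: a finitely generated integral `K`-algebra
whose units all come from `K*`.  The coordinate ring of `X × (K*)^r` is the Laurent
polynomial ring `A[ℤ^r] = AddMonoidAlgebra A (Fin r → ℤ)`, and an isomorphism of
varieties corresponds to an isomorphism of `K`-algebras. -/
theorem torus_factor_cancellation_rank (K : Type*) [Field K] [IsAlgClosed K]
    (A A' : Type*) [CommRing A] [IsDomain A] [Algebra K A]
    [CommRing A'] [IsDomain A'] [Algebra K A']
    (hfg : Algebra.FiniteType K A) (hfg' : Algebra.FiniteType K A')
    (hunits : ∀ u : Aˣ, ∃ c : Kˣ, (u : A) = algebraMap K A (c : K))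
    (hunits' : ∀ u : A'ˣ, ∃ c : Kˣ, (u : A') = algebraMap K A' (c : K))
    (r r' : ℕ)
    (h : Nonempty
      (AddMonoidAlgebra A' (Fin r' → ℤ) ≃ₐ[K] AddMonoidAlgebra A (Fin r → ℤ))) :
    r = r' := by
  obtain ⟨e⟩ := h
  exact le_antisymm
    (torus_factor_le K A A' hunits' r r' e)
    (torus_factor_le K A' A hunits r' r e.symm)
end

section
/- Let K be an algebraically closed field, and let X, X' be irreducible varieties over K whose only invertible regular functions are constants. If f: X' × (K^*)^{r'} → X × (K^*)^r is an isomorphism of varieties, then X is isomorphic to X' as a variety. -/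
namespace TFC



variable {K R M : Type*}

lemma alg_single_eq [CommSemiring K] [CommSemiring R] [Algebra K R] [AddMonoid M] (x : K) :
    algebraMap K (AddMonoidAlgebra R M) x = AddMonoidAlgebra.single 0 (algebraMap K R x) := by
  rw [AddMonoidAlgebra.coe_algebraMap]; rfl

lemma algebraMap_mul_single [CommSemiring K] [CommSemiring R] [Algebra K R] [AddMonoid M]
    (m : M) (x : K) (b : R) :
    algebraMap K (AddMonoidAlgebra R M) x * AddMonoidAlgebra.single m b
      = AddMonoidAlgebra.single m (algebraMap K R x * b) := by
  rw [alg_single_eq, AddMonoidAlgebra.single_mul_single, zero_add]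

lemma single_alg_eq [Field K] [CommRing R] [Nontrivial R] [Algebra K R]
    {m n : M} {x y : Kˣ}
    (h : (AddMonoidAlgebra.single m (algebraMap K R (x : K)) : AddMonoidAlgebra R M)
        = AddMonoidAlgebra.single n (algebraMap K R (y : K))) :
    m = n ∧ x = y := by
  rcases AddMonoidAlgebra.single_inj.mp h with ⟨h1, h2⟩ | ⟨h1, h2⟩
  · exact ⟨h1, Units.ext ((algebraMap K R).injective h2)⟩
  · exact absurd ((algebraMap K R).injective (by rw [h1, map_zero])) x.ne_zero





end TFC

open Finsupp

section UnitLemma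

variable {R G : Type*} [CommRing R] [AddCommGroup G] [LinearOrder G] [IsOrderedAddMonoid G]

lemma TFC.mul_apply_maxadd {u v : AddMonoidAlgebra R G}
    (hu : u.coeff.support.Nonempty) (hv : v.coeff.support.Nonempty) :
    (u * v).coeff (u.coeff.support.max' hu + v.coeff.support.max' hv)
      = u.coeff (u.coeff.support.max' hu) * v.coeff (v.coeff.support.max' hv) := by
  classical
  rw [AddMonoidAlgebra.mul_apply]
  simp only [Finsupp.sum]
  rw [Finset.sum_eq_single_of_mem (u.coeff.support.max' hu) (Finset.max'_mem _ _)]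
  · rw [Finset.sum_eq_single_of_mem (v.coeff.support.max' hv) (Finset.max'_mem _ _)]
    · rw [if_pos rfl]
    · intro b hb hbne
      rw [if_neg]
      intro hEq
      exact hbne (add_left_cancel hEq)
  · intro a ha hane
    apply Finset.sum_eq_zero
    intro b hb
    rw [if_neg]
    intro hEq
    have h1 : a < u.coeff.support.max' hu := lt_of_le_of_ne (Finset.le_max' _ _ ha) hane
    have h2 : b ≤ v.coeff.support.max' hv := Finset.le_max' _ _ hb
    exact absurd hEq (ne_of_lt (add_lt_add_of_lt_of_le h1 h2))

lemma TFC.mul_apply_minadd {u v : AddMonoidAlgebra R G}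
    (hu : u.coeff.support.Nonempty) (hv : v.coeff.support.Nonempty) :
    (u * v).coeff (u.coeff.support.min' hu + v.coeff.support.min' hv)
      = u.coeff (u.coeff.support.min' hu) * v.coeff (v.coeff.support.min' hv) := by
  classical
  rw [AddMonoidAlgebra.mul_apply]
  simp only [Finsupp.sum]
  rw [Finset.sum_eq_single_of_mem (u.coeff.support.min' hu) (Finset.min'_mem _ _)]
  · rw [Finset.sum_eq_single_of_mem (v.coeff.support.min' hv) (Finset.min'_mem _ _)]
    · rw [if_pos rfl]
    · intro b hb hbne
      rw [if_neg]
      intro hEq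
      exact hbne (add_left_cancel hEq)
  · intro a ha hane
    apply Finset.sum_eq_zero
    intro b hb
    rw [if_neg]
    intro hEq
    have h1 : u.coeff.support.min' hu < a := lt_of_le_of_ne (Finset.min'_le _ _ ha) (Ne.symm hane)
    have h2 : v.coeff.support.min' hv ≤ b := Finset.min'_le _ _ hb
    exact absurd hEq (ne_of_gt (add_lt_add_of_lt_of_le h1 h2))

lemma TFC.unit_single_lex [IsDomain R] {u v : AddMonoidAlgebra R G} (h : u * v = 1) :
    ∃ (g : G) (a : R), IsUnit a ∧ u = AddMonoidAlgebra.single g a := by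
  classical
  have hu0 : u ≠ 0 := by rintro rfl; rw [zero_mul] at h; exact zero_ne_one h
  have hv0 : v ≠ 0 := by rintro rfl; rw [mul_zero] at h; exact zero_ne_one h
  have hu : u.coeff.support.Nonempty := Finsupp.support_nonempty_iff.mpr (mt AddMonoidAlgebra.coeff_eq_zero.mp hu0)
  have hv : v.coeff.support.Nonempty := Finsupp.support_nonempty_iff.mpr (mt AddMonoidAlgebra.coeff_eq_zero.mp hv0)
  set Mu := u.coeff.support.max' hu with hMu
  set Mv := v.coeff.support.max' hv with hMv
  set mu := u.coeff.support.min' hu with hmu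
  set mv := v.coeff.support.min' hv with hmv
  have hone : (1 : AddMonoidAlgebra R G) = AddMonoidAlgebra.single 0 1 := AddMonoidAlgebra.one_def
  have key : ∀ x : G, (u * v).coeff x ≠ 0 → x = 0 := by
    intro x hx
    by_contra hne
    rw [h, hone, AddMonoidAlgebra.coeff_single, Finsupp.single_eq_of_ne' (Ne.symm hne)] at hx
    exact hx rfl
  have hMne : u.coeff Mu * v.coeff Mv ≠ 0 :=
    mul_ne_zero (Finsupp.mem_support_iff.mp (Finset.max'_mem _ _))
      (Finsupp.mem_support_iff.mp (Finset.max'_mem _ _))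
  have hmne : u.coeff mu * v.coeff mv ≠ 0 :=
    mul_ne_zero (Finsupp.mem_support_iff.mp (Finset.min'_mem _ _))
      (Finsupp.mem_support_iff.mp (Finset.min'_mem _ _))
  have hM : Mu + Mv = 0 := key _ (by rw [TFC.mul_apply_maxadd hu hv]; exact hMne)
  have hm : mu + mv = 0 := key _ (by rw [TFC.mul_apply_minadd hu hv]; exact hmne)
  have hle1 : mu ≤ Mu := Finset.min'_le _ _ (Finset.max'_mem _ _)
  have hle2 : mv ≤ Mv := Finset.min'_le _ _ (Finset.max'_mem _ _)
  have heq : mu = Mu := by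
    by_contra hne
    have : mu + mv < Mu + Mv := add_lt_add_of_lt_of_le (lt_of_le_of_ne hle1 hne) hle2
    rw [hm, hM] at this
    exact lt_irrefl _ this
  have hsupp : u.coeff.support ⊆ {Mu} := by
    intro a ha
    have h1 : a ≤ Mu := Finset.le_max' _ _ ha
    have h2 : mu ≤ a := Finset.min'_le _ _ ha
    rw [heq] at h2
    simp [le_antisymm h1 h2]
  obtain ⟨a, hu_single'⟩ := Finsupp.support_subset_singleton'.mp hsupp
  have hu_single : u = AddMonoidAlgebra.single Mu a := AddMonoidAlgebra.ext hu_single'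
  -- similarly for v
  have heq' : mv = Mv := by
    by_contra hne
    have : mu + mv < Mu + Mv := add_lt_add_of_le_of_lt hle1 (lt_of_le_of_ne hle2 hne)
    rw [hm, hM] at this
    exact lt_irrefl _ this
  have hsupp' : v.coeff.support ⊆ {Mv} := by
    intro a ha
    have h1 : a ≤ Mv := Finset.le_max' _ _ ha
    have h2 : mv ≤ a := Finset.min'_le _ _ ha
    rw [heq'] at h2
    simp [le_antisymm h1 h2]
  obtain ⟨b, hv_single'⟩ := Finsupp.support_subset_singleton'.mp hsupp'
  have hv_single : v = AddMonoidAlgebra.single Mv b := AddMonoidAlgebra.ext hv_single'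
  refine ⟨Mu, a, ?_, hu_single⟩
  apply IsUnit.of_mul_eq_one b
  rw [hu_single, hv_single, AddMonoidAlgebra.single_mul_single, hM, hone] at h
  exact AddMonoidAlgebra.single_right_injective h

end UnitLemma

lemma TFC.unit_single_pi {R : Type*} [CommRing R] [IsDomain R] {r : ℕ}
    {u v : AddMonoidAlgebra R (Fin r → ℤ)} (h : u * v = 1) :
    ∃ (g : Fin r → ℤ) (a : R), IsUnit a ∧ u = AddMonoidAlgebra.single g a := by
  haveI : WellFoundedLT (Fin r) := Finite.to_wellFoundedLT
  let e : (Fin r → ℤ) ≃+ Lex (Fin r → ℤ) := { toLex with map_add' := fun _ _ => rfl }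
  let E : AddMonoidAlgebra R (Fin r → ℤ) ≃ₐ[ℤ] AddMonoidAlgebra R (Lex (Fin r → ℤ)) :=
    AddMonoidAlgebra.domCongr ℤ R e
  obtain ⟨g, a, ha, hg⟩ := TFC.unit_single_lex (u := E u) (v := E v)
    (by rw [← map_mul, h, map_one])
  refine ⟨e.symm g, a, ha, ?_⟩
  apply E.injective
  rw [hg]
  have := AddMonoidAlgebra.domCongr_single (R := ℤ) (A := R) e (e.symm g) a
  rw [this, AddEquiv.apply_symm_apply]


/-- Cancellation of torus factors (second assertion of Lemma 4.3): if `X`, `X'` are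
irreducible (affine) varieties over an algebraically closed field `K` whose only
invertible regular functions are constants, and `f : X' × (K*)^{r'} → X × (K*)^r` is an
isomorphism of varieties, then `X ≅ X'` as varieties.

We encode a variety by its coordinate ring: a finitely generated integral `K`-algebra
whose units all come from `K*`.  The coordinate ring of `X × (K*)^r` is the Laurent
polynomial ring `A[ℤ^r] = AddMonoidAlgebra A (Fin r → ℤ)`, and an isomorphism of
varieties corresponds to an isomorphism of `K`-algebras. -/
theorem torus_factor_cancellation_base (K : Type*) [Field K] [IsAlgClosed K]
    (A A' : Type*) [CommRing A] [IsDomain A] [Algebra K A]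
    [CommRing A'] [IsDomain A'] [Algebra K A']
    (hfg : Algebra.FiniteType K A) (hfg' : Algebra.FiniteType K A')
    (hunits : ∀ u : Aˣ, ∃ c : Kˣ, (u : A) = algebraMap K A (c : K))
    (hunits' : ∀ u : A'ˣ, ∃ c : Kˣ, (u : A') = algebraMap K A' (c : K))
    (r r' : ℕ)
    (f : AddMonoidAlgebra A' (Fin r' → ℤ) ≃ₐ[K] AddMonoidAlgebra A (Fin r → ℤ)) :
    Nonempty (A ≃ₐ[K] A') := by
  classical
  -- unit classification for images of monomials under f
  have hfu : ∀ m' : Fin r' → ℤ, ∃ (m : Fin r → ℤ) (c : Kˣ),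
      f (AddMonoidAlgebra.single m' (1 : A')) = AddMonoidAlgebra.single m (algebraMap K A (c : K)) := by
    intro m'
    have hone' : AddMonoidAlgebra.single m' (1 : A') * AddMonoidAlgebra.single (-m') (1 : A') = 1 := by
      rw [AddMonoidAlgebra.single_mul_single, add_neg_cancel, one_mul,
        ← AddMonoidAlgebra.one_def]
    have hmul : f (AddMonoidAlgebra.single m' (1 : A'))
        * f (AddMonoidAlgebra.single (-m') (1 : A')) = 1 := by
      rw [← map_mul, hone', map_one]
    obtain ⟨m, a, ha, hs⟩ := TFC.unit_single_pi hmul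
    obtain ⟨c0, hc0⟩ := hunits ha.unit
    exact ⟨m, c0, by rw [hs, ← ha.unit_spec, hc0]⟩
  choose φ γ hφγ using hfu
  have hfu' : ∀ m : Fin r → ℤ, ∃ (m' : Fin r' → ℤ) (c : Kˣ),
      f.symm (AddMonoidAlgebra.single m (1 : A)) = AddMonoidAlgebra.single m' (algebraMap K A' (c : K)) := by
    intro m
    have hone' : AddMonoidAlgebra.single m (1 : A) * AddMonoidAlgebra.single (-m) (1 : A) = 1 := by
      rw [AddMonoidAlgebra.single_mul_single, add_neg_cancel, one_mul,
        ← AddMonoidAlgebra.one_def]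
    have hmul : f.symm (AddMonoidAlgebra.single m (1 : A))
        * f.symm (AddMonoidAlgebra.single (-m) (1 : A)) = 1 := by
      rw [← map_mul, hone', map_one]
    obtain ⟨m', a, ha, hs⟩ := TFC.unit_single_pi hmul
    obtain ⟨c0, hc0⟩ := hunits' ha.unit
    exact ⟨m', c0, by rw [hs, ← ha.unit_spec, hc0]⟩
  choose ψ c hψc using hfu'
  -- basic compatibilities
  have key1 : ∀ m' : Fin r' → ℤ, ψ (φ m') = m' ∧ γ m' * c (φ m') = 1 := by
    intro m'
    have h1 : f.symm (AddMonoidAlgebra.single (φ m') (algebraMap K A (γ m' : K)))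
        = AddMonoidAlgebra.single m' (algebraMap K A' ((1 : Kˣ) : K)) := by
      rw [← hφγ m', AlgEquiv.symm_apply_apply, Units.val_one, map_one]
    rw [← mul_one (algebraMap K A (γ m' : K)), ← TFC.algebraMap_mul_single, map_mul,
      AlgEquiv.commutes, hψc, TFC.algebraMap_mul_single] at h1
    rw [← map_mul, ← Units.val_mul] at h1
    have h2 := TFC.single_alg_eq (K := K) h1
    exact h2
  have key2 : ∀ m : Fin r → ℤ, φ (ψ m) = m ∧ c m * γ (ψ m) = 1 := by
    intro m
    have h1 : f (AddMonoidAlgebra.single (ψ m) (algebraMap K A' (c m : K)))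
        = AddMonoidAlgebra.single m (algebraMap K A ((1 : Kˣ) : K)) := by
      rw [← hψc m, AlgEquiv.apply_symm_apply, Units.val_one, map_one]
    rw [← mul_one (algebraMap K A' (c m : K)), ← TFC.algebraMap_mul_single, map_mul,
      AlgEquiv.commutes, hφγ, TFC.algebraMap_mul_single, ← map_mul, ← Units.val_mul] at h1
    exact TFC.single_alg_eq (K := K) h1
  have key_add : ∀ m n : Fin r → ℤ, ψ (m + n) = ψ m + ψ n ∧ c (m + n) = c m * c n := by
    intro m n
    have h1 : f.symm (AddMonoidAlgebra.single (m + n) (1 : A))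
        = AddMonoidAlgebra.single (ψ m + ψ n) (algebraMap K A' ((c m * c n : Kˣ) : K)) := by
      have hsplit : AddMonoidAlgebra.single (m + n) (1 : A)
          = AddMonoidAlgebra.single m (1 : A) * AddMonoidAlgebra.single n (1 : A) := by
        rw [AddMonoidAlgebra.single_mul_single, one_mul]
      rw [hsplit, map_mul, hψc, hψc, AddMonoidAlgebra.single_mul_single,
        Units.val_mul, map_mul]
    rw [hψc] at h1
    exact TFC.single_alg_eq (K := K) h1
  have key_zero : ψ 0 = 0 ∧ c 0 = 1 := by
    have h1 : f.symm (AddMonoidAlgebra.single (0 : Fin r → ℤ) (1 : A))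
        = AddMonoidAlgebra.single (0 : Fin r' → ℤ) (algebraMap K A' ((1 : Kˣ) : K)) := by
      rw [← AddMonoidAlgebra.one_def, map_one, Units.val_one, map_one,
        ← AddMonoidAlgebra.one_def]
    rw [hψc] at h1
    exact TFC.single_alg_eq (K := K) h1
  -- evaluation maps
  let Chom : Multiplicative (Fin r → ℤ) →* A :=
    { toFun := fun m => algebraMap K A ((c m.toAdd : Kˣ) : K)
      map_one' := by
        show algebraMap K A ((c 0 : Kˣ) : K) = 1
        rw [key_zero.2, Units.val_one, map_one]
      map_mul' := by
        intro x y
        show algebraMap K A ((c (x.toAdd + y.toAdd) : Kˣ) : K) = _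
        rw [(key_add _ _).2, Units.val_mul, map_mul] }
  let ev : AddMonoidAlgebra A (Fin r → ℤ) →ₐ[A] A :=
    AddMonoidAlgebra.lift A A (Fin r → ℤ) Chom
  let ev' : AddMonoidAlgebra A' (Fin r' → ℤ) →ₐ[A'] A' :=
    AddMonoidAlgebra.lift A' A' (Fin r' → ℤ) 1
  have hev : ∀ (m : Fin r → ℤ) (a : A),
      ev (AddMonoidAlgebra.single m a) = a * algebraMap K A ((c m : Kˣ) : K) := by
    intro m a
    rw [show ev (AddMonoidAlgebra.single m a) = a • Chom (Multiplicative.ofAdd m) from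
      AddMonoidAlgebra.lift_single _ _ _]
    rw [smul_eq_mul]
    rfl
  have hev' : ∀ (m : Fin r' → ℤ) (a : A'), ev' (AddMonoidAlgebra.single m a) = a := by
    intro m a
    rw [show ev' (AddMonoidAlgebra.single m a)
        = a • (1 : Multiplicative (Fin r' → ℤ) →* A') (Multiplicative.ofAdd m) from
      AddMonoidAlgebra.lift_single _ _ _]
    rw [MonoidHom.one_apply, smul_eq_mul, mul_one]
  -- the two algebra homomorphisms
  let gHom : A →ₐ[K] A' :=
    { toRingHom := (ev'.toRingHom.comp ((f.symm : AddMonoidAlgebra A (Fin r → ℤ) ≃+*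
          AddMonoidAlgebra A' (Fin r' → ℤ)) : AddMonoidAlgebra A (Fin r → ℤ) →+*
          AddMonoidAlgebra A' (Fin r' → ℤ))).comp AddMonoidAlgebra.singleZeroRingHom
      commutes' := by
        intro k
        show ev' (f.symm (AddMonoidAlgebra.single 0 (algebraMap K A k))) = algebraMap K A' k
        rw [← TFC.alg_single_eq, AlgEquiv.commutes, TFC.alg_single_eq, hev'] }
  let g'Hom : A' →ₐ[K] A :=
    { toRingHom := (ev.toRingHom.comp ((f : AddMonoidAlgebra A' (Fin r' → ℤ) ≃+*
          AddMonoidAlgebra A (Fin r → ℤ)) : AddMonoidAlgebra A' (Fin r' → ℤ) →+*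
          AddMonoidAlgebra A (Fin r → ℤ))).comp AddMonoidAlgebra.singleZeroRingHom
      commutes' := by
        intro k
        show ev (f (AddMonoidAlgebra.single 0 (algebraMap K A' k))) = algebraMap K A k
        rw [← TFC.alg_single_eq, AlgEquiv.commutes, TFC.alg_single_eq, hev,
          key_zero.2, Units.val_one, map_one, mul_one] }
  have hg : ∀ a : A, gHom a = ev' (f.symm (AddMonoidAlgebra.single 0 a)) := fun a => rfl
  have hg' : ∀ a : A', g'Hom a = ev (f (AddMonoidAlgebra.single 0 a)) := fun a => rfl
  have L1 : ∀ b : AddMonoidAlgebra A' (Fin r' → ℤ), ev (f b) = g'Hom (ev' b) := by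
    intro b
    induction b using AddMonoidAlgebra.induction_linear with
    | zero => simp
    | add p q hp hq => rw [map_add, map_add, map_add, map_add, hp, hq]
    | single m' a =>
      have hsplit : (AddMonoidAlgebra.single m' a : AddMonoidAlgebra A' (Fin r' → ℤ))
          = AddMonoidAlgebra.single 0 a * AddMonoidAlgebra.single m' 1 := by
        rw [AddMonoidAlgebra.single_mul_single, zero_add, mul_one]
      show ev (f (AddMonoidAlgebra.single m' a)) = g'Hom (ev' (AddMonoidAlgebra.single m' a))
      rw [hsplit, map_mul, map_mul, hφγ, hev, map_mul, hev', hev', mul_one, ← hg',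
        ← map_mul, ← Units.val_mul, (key1 m').2, Units.val_one, map_one, mul_one]
  have L2 : ∀ b : AddMonoidAlgebra A (Fin r → ℤ), ev' (f.symm b) = gHom (ev b) := by
    intro b
    induction b using AddMonoidAlgebra.induction_linear with
    | zero => simp
    | add p q hp hq => rw [map_add, map_add, map_add, map_add, hp, hq]
    | single m a =>
      have hsplit : (AddMonoidAlgebra.single m a : AddMonoidAlgebra A (Fin r → ℤ))
          = AddMonoidAlgebra.single 0 a * AddMonoidAlgebra.single m 1 := by
        rw [AddMonoidAlgebra.single_mul_single, zero_add, mul_one]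
      show ev' (f.symm (AddMonoidAlgebra.single m a)) = gHom (ev (AddMonoidAlgebra.single m a))
      rw [hsplit, map_mul, map_mul, hψc, hev', ← hg, map_mul, hev, hev,
        key_zero.2, Units.val_one, map_one, mul_one, one_mul, map_mul, AlgHom.commutes]
  have hleft : ∀ a : A, g'Hom (gHom a) = a := by
    intro a
    have h1 := L1 (f.symm (AddMonoidAlgebra.single 0 a))
    rw [AlgEquiv.apply_symm_apply, hev, key_zero.2, Units.val_one, map_one, mul_one, ← hg] at h1
    exact h1.symm
  have hright : ∀ a : A', gHom (g'Hom a) = a := by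
    intro a
    have h1 := L2 (f (AddMonoidAlgebra.single 0 a))
    rw [AlgEquiv.symm_apply_apply, hev', ← hg'] at h1
    exact h1.symm
  exact ⟨AlgEquiv.ofAlgHom gHom g'Hom (AlgHom.ext hright) (AlgHom.ext hleft)⟩
end

section
/- Let K be a field and R = K[x,y,z]/(z^2 − xy). The localization of R at the prime ideal P = (y, z) is a discrete valuation ring, and the element y has valuation 2 while z has valuation 1 in this DVR. -/
open MvPolynomial
set_option synthInstance.maxHeartbeats 1000000

set_option maxRecDepth 4000
set_option maxHeartbeats 2000000

noncomputable section QuadricConeAux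

variable (K : Type*) [Field K]




private lemma qc_prime_X0 : Prime (X 0 : MvPolynomial (Fin 2) K) := by
  have := (MulEquiv.prime_iff (MvPolynomial.finSuccEquiv K 1).toMulEquiv
    (p := (X 0 : MvPolynomial (Fin 2) K))).symm
  rw [this]
  simpa [MvPolynomial.finSuccEquiv_X_zero] using
    (Polynomial.prime_X : Prime (Polynomial.X : Polynomial (MvPolynomial (Fin 1) K)))

private lemma qc_not_dvd : ¬ (X 0 : MvPolynomial (Fin 2) K) ∣ X 1 := by
  rintro ⟨g, hg⟩
  have := congrArg (aeval (fun i : Fin 2 => if i = 0 then (0 : K) else 1)) hg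
  simp at this

private lemma qc_prime_aux :
    Prime (Polynomial.X ^ 2 - Polynomial.C (X 1 * X 0) :
      Polynomial (MvPolynomial (Fin 2) K)) := by
  rw [← UniqueFactorizationMonoid.irreducible_iff_prime]
  set c : MvPolynomial (Fin 2) K := X 1 * X 0 with hc
  have hmonic : (Polynomial.X ^ 2 - Polynomial.C c).Monic :=
    Polynomial.monic_X_pow_sub_C c two_ne_zero
  have hdeg : (Polynomial.X ^ 2 - Polynomial.C c).natDegree = 2 :=
    Polynomial.natDegree_X_pow_sub_C
  have hX0 : Prime (X 0 : MvPolynomial (Fin 2) K) := qc_prime_X0 K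
  have hP : (Ideal.span {(X 0 : MvPolynomial (Fin 2) K)}).IsPrime :=
    (Ideal.span_singleton_prime hX0.ne_zero).2 hX0
  have hEis : (Polynomial.X ^ 2 - Polynomial.C c).IsEisensteinAt
      (Ideal.span {(X 0 : MvPolynomial (Fin 2) K)}) := by
    constructor
    · rw [hmonic.leadingCoeff]
      exact fun h => hP.ne_top (Ideal.eq_top_of_isUnit_mem _ h isUnit_one)
    · intro n hn
      rw [hdeg] at hn
      interval_cases n <;>
        simp [Polynomial.coeff_sub, Polynomial.coeff_X_pow, hc,
          Ideal.neg_mem_iff, Ideal.mul_mem_left, Ideal.mem_span_singleton]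
    · rw [Ideal.span_singleton_pow]
      simp only [Polynomial.coeff_sub, Polynomial.coeff_X_pow, Polynomial.coeff_C]
      norm_num
      rw [Ideal.mem_span_singleton, hc, pow_two]
      intro h
      exact qc_not_dvd K ((mul_dvd_mul_iff_right hX0.ne_zero).mp h)
  exact hEis.irreducible hP hmonic.isPrimitive (by rw [hdeg]; norm_num)

private lemma qc_prime_f :
    Prime ((X 2 : MvPolynomial (Fin 3) K) ^ 2 - X 0 * X 1) := by
  let e := (renameEquiv K (Equiv.swap (0 : Fin 3) 2)).trans (finSuccEquiv K 2)
  rw [← MulEquiv.prime_iff e.toMulEquiv]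
  have h2 : e ((X 2 : MvPolynomial (Fin 3) K) ^ 2 - X 0 * X 1)
      = Polynomial.X ^ 2 - Polynomial.C (X 1 * X 0) := by
    have hswap1 : Equiv.swap (0 : Fin 3) 2 1 = 1 :=
      Equiv.swap_apply_of_ne_of_ne (by decide) (by decide)
    have e20 : e (X 2) = Polynomial.X := by
      rw [AlgEquiv.trans_apply, renameEquiv_apply, rename_X, Equiv.swap_apply_right,
        finSuccEquiv_X_zero]
    have e0 : e (X 0) = Polynomial.C (X 1) := by
      have h21 : ((2 : Fin 3)) = Fin.succ 1 := by decide
      rw [AlgEquiv.trans_apply, renameEquiv_apply, rename_X, Equiv.swap_apply_left, h21,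
        finSuccEquiv_X_succ]
    have e1 : e (X 1) = Polynomial.C (X 0) := by
      have h10 : ((1 : Fin 3)) = Fin.succ 0 := by decide
      rw [AlgEquiv.trans_apply, renameEquiv_apply, rename_X, hswap1, h10, finSuccEquiv_X_succ]
    rw [map_sub, map_pow, map_mul, e20, e0, e1, ← map_mul]
  have hcoe : e.toMulEquiv ((X 2 : MvPolynomial (Fin 3) K) ^ 2 - X 0 * X 1)
      = e ((X 2 : MvPolynomial (Fin 3) K) ^ 2 - X 0 * X 1) := rfl
  rw [hcoe, h2]
  exact qc_prime_aux K





private def qcPsi : MvPolynomial (Fin 3) K →ₐ[K] MvPolynomial (Fin 3) K :=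
  aeval (fun i => if i = 0 then X 0 else 0)

private lemma qcPsi_X0 : qcPsi K (X 0) = X 0 := by simp [qcPsi]
private lemma qcPsi_X1 : qcPsi K (X 1) = 0 := by simp [qcPsi]
private lemma qcPsi_X2 : qcPsi K (X 2) = 0 := by simp [qcPsi]

private lemma qc_sub_psi_mem (p : MvPolynomial (Fin 3) K) :
    p - qcPsi K p ∈ Ideal.span ({X 1, X 2} : Set (MvPolynomial (Fin 3) K)) := by
  induction p using MvPolynomial.induction_on with
  | C a => simp [qcPsi]
  | add p q hp hq => simpa [add_sub_add_comm] using Ideal.add_mem _ hp hq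
  | mul_X p i hp =>
    rw [map_mul]
    fin_cases i
    · rw [show ((⟨0, by norm_num⟩ : Fin 3)) = 0 from rfl, qcPsi_X0, ← sub_mul]
      exact Ideal.mul_mem_right _ _ hp
    · rw [show ((⟨1, by norm_num⟩ : Fin 3)) = 1 from rfl, qcPsi_X1, mul_zero, sub_zero]
      exact Ideal.mul_mem_left _ _ (Ideal.subset_span (by simp))
    · rw [show ((⟨2, by norm_num⟩ : Fin 3)) = 2 from rfl, qcPsi_X2, mul_zero, sub_zero]
      exact Ideal.mul_mem_left _ _ (Ideal.subset_span (by simp))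

private lemma qc_psi_eq_zero {p : MvPolynomial (Fin 3) K}
    (hp : p ∈ Ideal.span ({X 1, X 2} : Set (MvPolynomial (Fin 3) K))) :
    qcPsi K p = 0 := by
  obtain ⟨a, b, rfl⟩ := Ideal.mem_span_pair.mp hp
  simp [map_add, map_mul, qcPsi_X1, qcPsi_X2]

private lemma qc_mem_iff {p : MvPolynomial (Fin 3) K} :
    p ∈ Ideal.span ({X 1, X 2} : Set (MvPolynomial (Fin 3) K)) ↔ qcPsi K p = 0 := by
  refine ⟨qc_psi_eq_zero K, fun h => ?_⟩
  have := qc_sub_psi_mem K p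
  rwa [h, sub_zero] at this

private lemma qc_Q_prime :
    (Ideal.span ({X 1, X 2} : Set (MvPolynomial (Fin 3) K))).IsPrime := by
  constructor
  · intro h
    have : qcPsi K 1 = 0 := qc_psi_eq_zero K (h ▸ Submodule.mem_top)
    rw [map_one] at this
    exact one_ne_zero this
  · intro p q hpq
    rw [qc_mem_iff] at hpq ⊢
    rw [qc_mem_iff (K := K) (p := q)]
    rw [map_mul] at hpq
    exact mul_eq_zero.mp hpq


private abbrev qcI : Ideal (MvPolynomial (Fin 3) K) :=
  Ideal.span {(X 2 : MvPolynomial (Fin 3) K) ^ 2 - X 0 * X 1}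

private abbrev qcR := MvPolynomial (Fin 3) K ⧸ qcI K

private abbrev qcP : Ideal (qcR K) :=
  Ideal.span {Ideal.Quotient.mk (qcI K) (X 1), Ideal.Quotient.mk (qcI K) (X 2)}

private lemma qcP_prime : (qcP K).IsPrime := by
  have hfQ : (X 2 : MvPolynomial (Fin 3) K) ^ 2 - X 0 * X 1
      ∈ Ideal.span ({X 1, X 2} : Set (MvPolynomial (Fin 3) K)) := by
    refine Ideal.sub_mem _ ?_ ?_
    · rw [pow_two]; exact Ideal.mul_mem_left _ _ (Ideal.subset_span (by simp))
    · exact Ideal.mul_mem_left _ _ (Ideal.subset_span (by simp))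
  have hIQ : qcI K ≤ Ideal.span ({X 1, X 2} : Set (MvPolynomial (Fin 3) K)) := by
    rw [Ideal.span_le, Set.singleton_subset_iff]; exact hfQ
  have hPmap : qcP K = (Ideal.span ({X 1, X 2} : Set (MvPolynomial (Fin 3) K))).map
      (Ideal.Quotient.mk (qcI K)) := by
    rw [Ideal.map_span, Set.image_pair]
  haveI := qc_Q_prime K
  rw [hPmap]
  exact Ideal.map_isPrime_of_surjective Ideal.Quotient.mk_surjective
    (by rw [Ideal.mk_ker]; exact hIQ)

private instance : (qcP K).IsPrime := qcP_prime K

private instance : (qcI K).IsPrime :=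
  (Ideal.span_singleton_prime (qc_prime_f K).ne_zero).2 (qc_prime_f K)

private lemma qc_x_not_mem : Ideal.Quotient.mk (qcI K) (X 0) ∉ qcP K := by
  intro h
  have hIQ : qcI K ≤ Ideal.span ({X 1, X 2} : Set (MvPolynomial (Fin 3) K)) := by
    rw [Ideal.span_le, Set.singleton_subset_iff]
    refine Ideal.sub_mem _ ?_ ?_
    · rw [pow_two]; exact Ideal.mul_mem_left _ _ (Ideal.subset_span (by simp))
    · exact Ideal.mul_mem_left _ _ (Ideal.subset_span (by simp))
  have hPmap : qcP K = (Ideal.span ({X 1, X 2} : Set (MvPolynomial (Fin 3) K))).map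
      (Ideal.Quotient.mk (qcI K)) := by
    rw [Ideal.map_span, Set.image_pair]
  have hcm : Ideal.comap (Ideal.Quotient.mk (qcI K))
      ((Ideal.span ({X 1, X 2} : Set (MvPolynomial (Fin 3) K))).map (Ideal.Quotient.mk (qcI K)))
      = Ideal.span ({X 1, X 2} : Set (MvPolynomial (Fin 3) K)) ⊔ RingHom.ker
        (Ideal.Quotient.mk (qcI K)) :=
    Ideal.comap_map_of_surjective _ Ideal.Quotient.mk_surjective _
  rw [Ideal.mk_ker, sup_eq_left.mpr hIQ] at hcm
  have hX0Q : (X 0 : MvPolynomial (Fin 3) K)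
      ∈ Ideal.span ({X 1, X 2} : Set (MvPolynomial (Fin 3) K)) := by
    rw [← hcm]
    exact Ideal.mem_comap.mpr (hPmap ▸ h)
  have := (qc_mem_iff K).mp hX0Q
  simp [qcPsi] at this

private lemma qc_z_ne_zero : Ideal.Quotient.mk (qcI K) (X 2) ≠ 0 := by
  intro h
  rw [Ideal.Quotient.eq_zero_iff_mem, Ideal.mem_span_singleton] at h
  obtain ⟨g, hg⟩ := h
  have := congrArg (aeval (fun i : Fin 3 => if i = 2 then (Polynomial.X : Polynomial K) else 0)) hg
  simp at this
  have h1 := congrArg (Polynomial.coeff · 1) this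
  simp [pow_two, mul_assoc, Polynomial.coeff_X_one] at h1

private lemma qc_pack :
    IsDiscreteValuationRing (Localization.AtPrime (qcP K)) ∧
      (algebraMap (qcR K) (Localization.AtPrime (qcP K)) (Ideal.Quotient.mk (qcI K) (X 1)) ∈
          IsLocalRing.maximalIdeal (Localization.AtPrime (qcP K)) ^ 2 ∧
        algebraMap (qcR K) (Localization.AtPrime (qcP K)) (Ideal.Quotient.mk (qcI K) (X 1)) ∉
          IsLocalRing.maximalIdeal (Localization.AtPrime (qcP K)) ^ 3) ∧
      (algebraMap (qcR K) (Localization.AtPrime (qcP K)) (Ideal.Quotient.mk (qcI K) (X 2)) ∈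
          IsLocalRing.maximalIdeal (Localization.AtPrime (qcP K)) ∧
        algebraMap (qcR K) (Localization.AtPrime (qcP K)) (Ideal.Quotient.mk (qcI K) (X 2)) ∉
          IsLocalRing.maximalIdeal (Localization.AtPrime (qcP K)) ^ 2) := by
  haveI : IsDomain (Localization.AtPrime (qcP K)) :=
    IsLocalization.isDomain_localization (qcP K).primeCompl_le_nonZeroDivisors
  haveI : IsNoetherianRing (Localization.AtPrime (qcP K)) :=
    IsLocalization.isNoetherianRing (qcP K).primeCompl (Localization.AtPrime (qcP K))
      inferInstance
  set Y := algebraMap (qcR K) (Localization.AtPrime (qcP K))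
    (Ideal.Quotient.mk (qcI K) (X 1)) with hYdef
  set Z := algebraMap (qcR K) (Localization.AtPrime (qcP K))
    (Ideal.Quotient.mk (qcI K) (X 2)) with hZdef
  set Xl := algebraMap (qcR K) (Localization.AtPrime (qcP K))
    (Ideal.Quotient.mk (qcI K) (X 0)) with hXldef
  have hinj : Function.Injective (algebraMap (qcR K) (Localization.AtPrime (qcP K))) :=
    IsLocalization.injective (Localization.AtPrime (qcP K))
      (qcP K).primeCompl_le_nonZeroDivisors
  have hZ0 : Z ≠ 0 := by
    intro h
    exact qc_z_ne_zero K (hinj (by rw [← hZdef, h, map_zero]))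
  have hXu : IsUnit Xl :=
    IsLocalization.map_units (Localization.AtPrime (qcP K))
      (⟨Ideal.Quotient.mk (qcI K) (X 0), qc_x_not_mem K⟩ : (qcP K).primeCompl)
  obtain ⟨u, hu⟩ := hXu
  have hrel : Ideal.Quotient.mk (qcI K) (X 2) ^ 2
      = Ideal.Quotient.mk (qcI K) (X 0) * Ideal.Quotient.mk (qcI K) (X 1) := by
    have h0 : Ideal.Quotient.mk (qcI K) ((X 2 : MvPolynomial (Fin 3) K) ^ 2 - X 0 * X 1) = 0 := by
      rw [Ideal.Quotient.eq_zero_iff_mem]; exact Ideal.subset_span rfl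
    rw [map_sub, map_pow, map_mul, sub_eq_zero] at h0
    exact h0
  have hYX : Y * Xl = Z ^ 2 := by
    rw [hYdef, hXldef, hZdef, ← map_mul, ← map_pow, hrel, mul_comm, map_mul]
  have hYval : Y = Z ^ 2 * ↑u⁻¹ := by
    have h1 : Y * Xl * ↑u⁻¹ = Z ^ 2 * ↑u⁻¹ := by rw [hYX]
    rwa [mul_assoc, ← hu, Units.mul_inv, mul_one] at h1
  have hm : IsLocalRing.maximalIdeal (Localization.AtPrime (qcP K)) = Ideal.span {Z} := by
    have h1 : Ideal.map (algebraMap (qcR K) (Localization.AtPrime (qcP K))) (qcP K)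
        = IsLocalRing.maximalIdeal (Localization.AtPrime (qcP K)) :=
      Localization.AtPrime.map_eq_maximalIdeal
    rw [← h1, Ideal.map_span, Set.image_pair]
    apply le_antisymm
    · rw [Ideal.span_le, Set.insert_subset_iff, Set.singleton_subset_iff]
      constructor
      · rw [SetLike.mem_coe, Ideal.mem_span_singleton]
        exact ⟨Z * ↑u⁻¹, by show Y = Z * (Z * ↑u⁻¹); rw [hYval]; ring⟩
      · exact Ideal.subset_span rfl
    · exact Ideal.span_mono (by simp [hZdef])
  have hZm : Z ∈ IsLocalRing.maximalIdeal (Localization.AtPrime (qcP K)) := by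
    rw [hm]; exact Ideal.subset_span rfl
  have hZnu : ¬IsUnit Z := hZm
  have hnf : ¬IsField (Localization.AtPrime (qcP K)) := by
    intro hF
    have := (IsLocalRing.isField_iff_maximalIdeal_eq).mp hF
    rw [hm] at this
    exact hZ0 (Ideal.span_singleton_eq_bot.mp this)
  have hprin : (IsLocalRing.maximalIdeal (Localization.AtPrime (qcP K))).IsPrincipal := ⟨⟨Z, hm⟩⟩
  have hdvr : IsDiscreteValuationRing (Localization.AtPrime (qcP K)) :=
    ((IsDiscreteValuationRing.TFAE (Localization.AtPrime (qcP K)) hnf).out 0 4).mpr hprin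
  refine ⟨hdvr, ⟨?_, ?_⟩, hZm, ?_⟩
  · rw [hm, Ideal.span_singleton_pow, Ideal.mem_span_singleton]
    exact ⟨↑u⁻¹, hYval⟩
  · rw [hm, Ideal.span_singleton_pow, Ideal.mem_span_singleton]
    rintro ⟨c, hc⟩
    have h1 : Z ^ 2 * 1 = Z ^ 2 * (Z * (c * Xl)) := by
      calc Z ^ 2 * 1 = Y * Xl := by rw [mul_one, hYX]
        _ = (Z ^ 3 * c) * Xl := by rw [hc]
        _ = Z ^ 2 * (Z * (c * Xl)) := by ring
    have h2 := mul_left_cancel₀ (pow_ne_zero 2 hZ0) h1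
    exact hZnu (IsUnit.of_mul_eq_one _ h2.symm)
  · rw [hm, Ideal.span_singleton_pow, Ideal.mem_span_singleton]
    rintro ⟨c, hc⟩
    have h1 : Z * 1 = Z * (Z * c) := by
      rw [mul_one]
      conv_lhs => rw [hc]
      ring
    have h2 := mul_left_cancel₀ hZ0 h1
    exact hZnu (IsUnit.of_mul_eq_one _ h2.symm)


end QuadricConeAux

/-- In `R = K[x,y,z]/(z² − xy)`, the localization at the prime ideal `P = (y, z)` is a
discrete valuation ring, in which `y` has valuation `2` (it lies in `m² \ m³` for the
maximal ideal `m`) while `z` has valuation `1` (it lies in `m \ m²`). -/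
theorem quadricCone_localization_dvr (K : Type*) [Field K] :
    letI R := MvPolynomial (Fin 3) K ⧸
      (Ideal.span {(X 2 : MvPolynomial (Fin 3) K) ^ 2 - X 0 * X 1})
    letI P : Ideal R := Ideal.span {Ideal.Quotient.mk _ (X 1), Ideal.Quotient.mk _ (X 2)}
    ∃ (_ : P.IsPrime) (_ : IsDomain (Localization.AtPrime P)),
      IsDiscreteValuationRing (Localization.AtPrime P) ∧
      (algebraMap R (Localization.AtPrime P) (Ideal.Quotient.mk _ (X 1)) ∈
          IsLocalRing.maximalIdeal (Localization.AtPrime P) ^ 2 ∧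
        algebraMap R (Localization.AtPrime P) (Ideal.Quotient.mk _ (X 1)) ∉
          IsLocalRing.maximalIdeal (Localization.AtPrime P) ^ 3) ∧
      (algebraMap R (Localization.AtPrime P) (Ideal.Quotient.mk _ (X 2)) ∈
          IsLocalRing.maximalIdeal (Localization.AtPrime P) ∧
        algebraMap R (Localization.AtPrime P) (Ideal.Quotient.mk _ (X 2)) ∉
          IsLocalRing.maximalIdeal (Localization.AtPrime P) ^ 2) :=
  ⟨qcP_prime K, inferInstance, qc_pack K⟩
end
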